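/- Let (M, μ) be a measure space with 0 < μ(M) < ∞, and for square-integrable H : M → ℝ set c(H) = (1/μ(M))·∫_M H dμ and ℋ(H) = (4·c(H)² − 3·c(H²))·μ(M). Then for every real number c one has ℋ(H − c) = ℋ(H) − 2c·c(H)·μ(M) + c²·μ(M); as a function of c this is a quadratic with global minimum at c = c(H). Moreover, if H is not constant μ-almost everywhere, then {c₁²·ℋ(H − c₂) : c₁, c₂ ∈ ℝ} = ℝ, i.e. these values exhaust all real numbers. -/

import Mathlib

open MeasureTheory

theorem helicity_of_shifted_hamiltonian
    {M : Type*} [MeasurableSpace M] (μ : Measure M)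
    (hpos : 0 < μ Set.univ) (hfin : μ Set.univ < ⊤)
    (H : M → ℝ) (hH : MemLp H 2 μ)
    (c : (M → ℝ) → ℝ) (hc : ∀ K : M → ℝ, c K = ((μ Set.univ).toReal)⁻¹ * ∫ x, K x ∂μ)
    (ℋ : (M → ℝ) → ℝ)
    (hℋ : ∀ K : M → ℝ, ℋ K = (4 * (c K) ^ 2 - 3 * c (fun x => (K x) ^ 2)) * (μ Set.univ).toReal) :
    (∀ c₂ : ℝ, ℋ (fun x => H x - c₂)
        = ℋ H - 2 * c₂ * c H * (μ Set.univ).toReal + c₂ ^ 2 * (μ Set.univ).toReal) ∧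
    (∀ c₂ : ℝ, ℋ (fun x => H x - c H) ≤ ℋ (fun x => H x - c₂)) ∧
    ((¬ ∃ a : ℝ, H =ᵐ[μ] fun _ => a) →
      ∀ r : ℝ, ∃ c₁ c₂ : ℝ, c₁ ^ 2 * ℋ (fun x => H x - c₂) = r) := by
  haveI : IsFiniteMeasure μ := ⟨hfin⟩
  set V := (μ Set.univ).toReal with hVdef
  have hV : 0 < V := ENNReal.toReal_pos hpos.ne' hfin.ne
  have hV0 : V ≠ 0 := hV.ne'
  have hH1 : Integrable H μ := hH.integrable one_le_two
  have hH2 : Integrable (fun x => (H x)^2) μ := hH.integrable_sq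
  set cH := c H with hcH
  have hIH : ∫ x, H x ∂μ = cH * V := by
    rw [hcH, hc]; field_simp
  have h1 : ∀ c₂ : ℝ, ∫ x, (H x - c₂) ∂μ = (∫ x, H x ∂μ) - c₂ * V := by
    intro c₂
    rw [integral_sub hH1 (integrable_const c₂), integral_const]
    simp [smul_eq_mul, mul_comm]
    exact Or.inl rfl
  have h2 : ∀ c₂ : ℝ, ∫ x, (H x - c₂)^2 ∂μ
      = (∫ x, (H x)^2 ∂μ) - 2*c₂*(∫ x, H x ∂μ) + c₂^2 * V := by
    intro c₂
    have he : (fun x => (H x - c₂)^2)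
        = fun x => ((H x)^2 - 2 * c₂ * H x + c₂^2) := by
      funext x; ring
    have ia : Integrable (fun x => (H x)^2 - 2 * c₂ * H x) μ := by
      have := hH2.sub (hH1.const_mul (2 * c₂))
      exact this
    have ib : Integrable (fun x => 2 * c₂ * H x) μ := hH1.const_mul _
    rw [he, integral_add ia (integrable_const _), integral_sub hH2 ib,
        integral_const_mul, integral_const]
    simp only [smul_eq_mul, measureReal_def, ← hVdef]
    ring
  have hkey : ∀ c₂ : ℝ, ℋ (fun x => H x - c₂)
      = ℋ H - 2 * c₂ * cH * V + c₂ ^ 2 * V := by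
    intro c₂
    simp only [hℋ, hc, hcH]
    rw [h1 c₂, h2 c₂]
    field_simp
    ring
  refine ⟨hkey, ?_, ?_⟩
  · intro c₂
    rw [hkey c₂, hkey cH]
    nlinarith [sq_nonneg (c₂ - cH), hV.le]
  · intro hnc r
    have hInt : Integrable (fun x => (H x - cH)^2) μ := by
      have he : (fun x => (H x - cH)^2)
          = fun x => ((H x)^2 - 2 * cH * H x + cH^2) := by
        funext x; ring
      have ia : Integrable (fun x => (H x)^2 - 2 * cH * H x) μ := by
        have := hH2.sub (hH1.const_mul (2 * cH))
        exact this
      rw [he]; exact ia.add (integrable_const _)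
    have hpos2 : 0 < ∫ x, (H x - cH)^2 ∂μ := by
      rcases (integral_nonneg (f := fun x => (H x - cH)^2) (μ := μ) (fun x => sq_nonneg (H x - cH))).lt_or_eq with h | h
      · exact h
      · exfalso
        apply hnc
        refine ⟨cH, ?_⟩
        have h0 := (integral_eq_zero_iff_of_nonneg
          (fun x => sq_nonneg (H x - cH)) hInt).mp h.symm
        filter_upwards [h0] with x hx
        have hx' : (H x - cH)^2 = 0 := hx
        have hz := (pow_eq_zero_iff (two_ne_zero)).mp hx'
        exact sub_eq_zero.mp hz
    set m := ℋ (fun x => H x - cH) with hm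
    have hiv : ∫ x, (H x - cH)^2 ∂μ = (∫ x, (H x)^2 ∂μ) - cH^2 * V := by
      rw [h2 cH, hIH]; ring
    have hmval : m = -3 * ((∫ x, (H x)^2 ∂μ) - cH^2 * V) := by
      rw [hm, hkey cH, hℋ H, hc (fun x => (H x)^2), ← hcH]
      field_simp
      ring
    have hmneg : m < 0 := by
      rw [hmval, ← hiv]; nlinarith
    rcases le_or_gt r 0 with hr | hr
    · refine ⟨Real.sqrt (r / m), cH, ?_⟩
      rw [Real.sq_sqrt (by rw [div_nonneg_iff]; right; exact ⟨hr, hmneg.le⟩)]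
      exact div_mul_cancel₀ r hmneg.ne
    · refine ⟨Real.sqrt r, cH + Real.sqrt ((1 - m)/V), ?_⟩
      set s := Real.sqrt ((1 - m)/V) with hs
      have hnn : 0 ≤ (1 - m)/V := div_nonneg (by linarith) hV.le
      have hsq : s^2 = (1 - m)/V := Real.sq_sqrt hnn
      have hsqV : s^2 * V = 1 - m := by rw [hsq]; field_simp
      have hm2 : m = ℋ H - 2 * cH * cH * V + cH ^ 2 * V := hkey cH
      have hval : ℋ (fun x => H x - (cH + s)) = 1 := by
        rw [hkey]
        linear_combination hsqV - hm2
      rw [hval, Real.sq_sqrt hr.le, mul_one]
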